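/- arXiv:1409.4308 — 3 statements merged into one kernel-verified Lean document; each statement's English description precedes it below -/
import Mathlib

section
/- The norm on the unitization c₀⁺ = K ⊕ c₀, given by ‖(α,a)‖ = max(|α|, ‖a‖_∞), is power multiplicative: for every (α, a) ∈ c₀⁺ and every k ≥ 1, ‖(α,a)^k‖ = ‖(α,a)‖^k. -/
open Filter

/-- Multiplication on the unitization `c₀⁺ = K ⊕ c₀`:
`(α,μ)·(β,ν) = (αβ, αν + βμ + μν)` (pointwise operations on sequences). -/
def czeroUnitMul {K : Type*} [NontriviallyNormedField K] (p q : K × (ℕ → K)) : K × (ℕ → K) :=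
  (p.1 * q.1, fun n => p.1 * q.2 n + q.1 * p.2 n + p.2 n * q.2 n)

/-- Powers in the unitization, with unit `(1, 0)`. -/
def czeroUnitPow {K : Type*} [NontriviallyNormedField K] (p : K × (ℕ → K)) : ℕ → K × (ℕ → K)
  | 0 => (1, 0)
  | k + 1 => czeroUnitMul (czeroUnitPow p k) p

/-- The norm `‖(α,a)‖ = max(|α|, ‖a‖_∞)` on the unitization `c₀⁺`. -/
noncomputable def czeroUnitNorm {K : Type*} [NontriviallyNormedField K] (p : K × (ℕ → K)) : ℝ :=
  max ‖p.1‖ (⨆ n, ‖p.2 n‖)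

lemma czeroUnitPow_eq {K : Type*} [NontriviallyNormedField K] (α : K) (a : ℕ → K) (k : ℕ) :
    czeroUnitPow (α, a) k = (α ^ k, fun n => (α + a n) ^ k - α ^ k) := by
  induction k with
  | zero => simp [czeroUnitPow]; rfl
  | succ k ih =>
    rw [czeroUnitPow, ih, czeroUnitMul]
    refine Prod.ext (by simp [pow_succ]) ?_
    funext n
    simp only
    ring

/-- The norm on the unitization `c₀⁺ = K ⊕ c₀`, `‖(α,a)‖ = max(|α|, ‖a‖_∞)`,
is power multiplicative: for every `(α, a) ∈ c₀⁺` and every `k ≥ 1`,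
`‖(α,a)^k‖ = ‖(α,a)‖^k`. -/
theorem czeroUnit_norm_pow {K : Type*} [NontriviallyNormedField K] [IsUltrametricDist K]
    (α : K) (a : ℕ → K) (ha : Tendsto a atTop (nhds 0)) (k : ℕ) (hk : 1 ≤ k) :
    czeroUnitNorm (czeroUnitPow (α, a) k) = czeroUnitNorm (α, a) ^ k := by
  have hna : Tendsto (fun n => ‖a n‖) atTop (nhds 0) := by
    simpa using ha.norm
  have hbdd : BddAbove (Set.range fun n => ‖a n‖) := hna.bddAbove_range
  set s : ℝ := ⨆ n, ‖a n‖ with hs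
  have hsub_le : ∀ x y : K, ‖x - y‖ ≤ max ‖x‖ ‖y‖ := by
    intro x y
    rw [sub_eq_add_neg]
    simpa using IsUltrametricDist.norm_add_le_max x (-y)
  rw [czeroUnitPow_eq, czeroUnitNorm, czeroUnitNorm]
  simp only [norm_pow]
  rcases le_or_gt s ‖α‖ with hle | hlt
  · -- case sup ‖a‖ ≤ ‖α‖
    rw [max_eq_left hle]
    refine max_eq_left (ciSup_le fun n => ?_)
    have h1 : ‖α + a n‖ ≤ ‖α‖ := by
      refine (IsUltrametricDist.norm_add_le_max α (a n)).trans (max_le le_rfl ?_)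
      exact (le_ciSup hbdd n).trans hle
    calc ‖(α + a n) ^ k - α ^ k‖ ≤ max ‖(α + a n) ^ k‖ ‖α ^ k‖ := hsub_le _ _
      _ ≤ ‖α‖ ^ k := by
          simp only [norm_pow]
          exact max_le (pow_le_pow_left₀ (norm_nonneg _) h1 k) le_rfl
  · -- case ‖α‖ < sup ‖a‖ : sup is attained
    rw [max_eq_right hlt.le]
    -- find n₀ attaining the sup
    obtain ⟨n₁, hn₁⟩ := exists_lt_of_lt_ciSup hlt
    have hpos : 0 < ‖a n₁‖ := (norm_nonneg α).trans_lt hn₁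
    obtain ⟨N, hN⟩ := (hna.eventually (gt_mem_nhds hpos)).exists_forall_of_atTop
    obtain ⟨n₀, _, hn₀⟩ := (insert n₁ (Finset.range (N + 1))).exists_max_image
      (fun n => ‖a n‖) ⟨n₁, Finset.mem_insert_self _ _⟩
    have hmax : ∀ n, ‖a n‖ ≤ ‖a n₀‖ := by
      intro n
      rcases lt_or_ge n (N + 1) with h | h
      · exact hn₀ n (Finset.mem_insert_of_mem (Finset.mem_range.mpr h))
      · exact ((hN n (Nat.le_of_succ_le h)).le).trans
          (hn₀ n₁ (Finset.mem_insert_self _ _))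
    have hseq : s = ‖a n₀‖ :=
      le_antisymm (ciSup_le hmax) (le_ciSup hbdd n₀)
    have hαn₀ : ‖α‖ < ‖a n₀‖ := hseq ▸ hlt
    have hadd : ‖α + a n₀‖ = ‖a n₀‖ := by
      rw [IsUltrametricDist.norm_add_eq_max_of_norm_ne_norm (hαn₀.ne), max_eq_right hαn₀.le]
    have hupper : ∀ n, ‖(α + a n) ^ k - α ^ k‖ ≤ ‖a n₀‖ ^ k := by
      intro n
      have h1 : ‖α + a n‖ ≤ ‖a n₀‖ :=
        (IsUltrametricDist.norm_add_le_max α (a n)).trans (max_le hαn₀.le (hmax n))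
      calc ‖(α + a n) ^ k - α ^ k‖ ≤ max ‖(α + a n) ^ k‖ ‖α ^ k‖ := hsub_le _ _
        _ ≤ ‖a n₀‖ ^ k := by
            simp only [norm_pow]
            exact max_le (pow_le_pow_left₀ (norm_nonneg _) h1 k)
              (pow_le_pow_left₀ (norm_nonneg _) hαn₀.le k)
    have hat : ‖(α + a n₀) ^ k - α ^ k‖ = ‖a n₀‖ ^ k := by
      have hne : ‖(α + a n₀) ^ k‖ ≠ ‖α ^ k‖ := by
        simp only [norm_pow, hadd]
        exact (pow_lt_pow_left₀ hαn₀ (norm_nonneg _) (Nat.one_le_iff_ne_zero.mp hk)).ne'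
      rw [sub_eq_add_neg, IsUltrametricDist.norm_add_eq_max_of_norm_ne_norm (by simpa using hne)]
      simp only [norm_neg, norm_pow, hadd]
      exact max_eq_left (pow_le_pow_left₀ (norm_nonneg _) hαn₀.le k)
    have hsup : (⨆ n, ‖(α + a n) ^ k - α ^ k‖) = ‖a n₀‖ ^ k :=
      le_antisymm (ciSup_le hupper) (hat ▸ le_ciSup ⟨‖a n₀‖ ^ k, Set.forall_mem_range.mpr hupper⟩ n₀)
    rw [hsup, hseq, max_eq_right]
    exact pow_le_pow_left₀ (norm_nonneg _) hαn₀.le k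
end

section
/- For z ∉ σ(T) (the set of eigenvalues of T together with 0), the resolvent R_z(T) = (zI - T)⁻¹ belongs to the closed unital subalgebra of bounded operators on c₀ generated by T: it is the limit in operator norm of polynomials in T. -/
set_option synthInstance.maxHeartbeats 1000000
set_option maxHeartbeats 1000000

open Filter
open scoped ZeroAtInfty

/-- The operator algebra on `c₀` is a normed ring (restated locally to help
typeclass inference). -/
noncomputable instance (priority := 10000) {K : Type*} [NontriviallyNormedField K] :
    NormedRing (C₀(ℕ, K) →L[K] C₀(ℕ, K)) :=
  ContinuousLinearMap.toNormedRing

section Diag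
variable {K : Type*} [NontriviallyNormedField K]

/-- `A` acts diagonally with multiplier `m`. -/
def IsDiag (A : C₀(ℕ, K) →L[K] C₀(ℕ, K)) (m : ℕ → K) : Prop :=
  ∀ (y : C₀(ℕ, K)) (n : ℕ), A y n = m n * y n

/-- Build a diagonal operator from a bounded multiplier. -/
noncomputable def diagOp (m : ℕ → K) (C : ℝ) (hm : ∀ n, ‖m n‖ ≤ C) :
    C₀(ℕ, K) →L[K] C₀(ℕ, K) :=
  LinearMap.mkContinuous
    { toFun := fun y => ⟨⟨fun n => m n * y n, continuous_of_discreteTopology⟩, by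
        refine squeeze_zero_norm (fun n => ?_ : ∀ n, ‖m n * y n‖ ≤ C * ‖y n‖) ?_
        · simpa [norm_mul] using
            mul_le_mul_of_nonneg_right (hm n) (norm_nonneg (y n))
        · have := (y.zero_at_infty').norm
          simpa using this.const_mul C⟩
      map_add' := fun x y => by ext n; simp [mul_add]
      map_smul' := fun c y => by ext n; simp; ring }
    C
    (fun y => by
      have hC : 0 ≤ C := le_trans (norm_nonneg _) (hm 0)
      rw [← ZeroAtInftyContinuousMap.norm_toBCF_eq_norm]
      refine (BoundedContinuousFunction.norm_le (by positivity)).2 fun n => ?_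
      calc ‖m n * y n‖ ≤ C * ‖y n‖ := by
            simpa [norm_mul] using mul_le_mul_of_nonneg_right (hm n) (norm_nonneg (y n))
        _ ≤ C * ‖y‖ := by
            refine mul_le_mul_of_nonneg_left ?_ hC
            rw [← ZeroAtInftyContinuousMap.norm_toBCF_eq_norm]
            exact BoundedContinuousFunction.norm_coe_le_norm y.toBCF n)

lemma diagOp_isDiag (m : ℕ → K) (C : ℝ) (hm : ∀ n, ‖m n‖ ≤ C) :
    IsDiag (diagOp m C hm) m := fun _ _ => rfl

lemma isDiag_opNorm_le {A : C₀(ℕ, K) →L[K] C₀(ℕ, K)} {m : ℕ → K}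
    (hA : IsDiag A m) {C : ℝ} (hC : 0 ≤ C) (hm : ∀ n, ‖m n‖ ≤ C) : ‖A‖ ≤ C := by
  refine ContinuousLinearMap.opNorm_le_bound _ hC fun y => ?_
  rw [← ZeroAtInftyContinuousMap.norm_toBCF_eq_norm]
  refine (BoundedContinuousFunction.norm_le (by positivity)).2 fun n => ?_
  show ‖A y n‖ ≤ C * ‖y‖
  rw [hA y n]
  calc ‖m n * y n‖ ≤ C * ‖y n‖ := by
        simpa [norm_mul] using mul_le_mul_of_nonneg_right (hm n) (norm_nonneg (y n))
    _ ≤ C * ‖y‖ := by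
        refine mul_le_mul_of_nonneg_left ?_ hC
        rw [← ZeroAtInftyContinuousMap.norm_toBCF_eq_norm]
        exact BoundedContinuousFunction.norm_coe_le_norm y.toBCF n

lemma IsDiag.ext {A B : C₀(ℕ, K) →L[K] C₀(ℕ, K)} {m : ℕ → K}
    (hA : IsDiag A m) (hB : IsDiag B m) : A = B := by
  ext y n; rw [hA, hB]

lemma IsDiag.congr {A : C₀(ℕ, K) →L[K] C₀(ℕ, K)} {m m' : ℕ → K}
    (hA : IsDiag A m) (h : ∀ n, m n = m' n) : IsDiag A m' := by
  intro y n; rw [hA, h]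

lemma IsDiag.one : IsDiag (1 : C₀(ℕ, K) →L[K] C₀(ℕ, K)) (fun _ => 1) := by
  intro y n; simp [ContinuousLinearMap.one_apply]

lemma IsDiag.mul {A B : C₀(ℕ, K) →L[K] C₀(ℕ, K)} {ma mb : ℕ → K}
    (hA : IsDiag A ma) (hB : IsDiag B mb) : IsDiag (A * B) (fun n => ma n * mb n) := by
  intro y n
  rw [ContinuousLinearMap.mul_apply, hA, hB, mul_assoc]

lemma IsDiag.add {A B : C₀(ℕ, K) →L[K] C₀(ℕ, K)} {ma mb : ℕ → K}
    (hA : IsDiag A ma) (hB : IsDiag B mb) : IsDiag (A + B) (fun n => ma n + mb n) := by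
  intro y n
  simp [ContinuousLinearMap.add_apply, hA y n, hB y n, add_mul]

lemma IsDiag.sub {A B : C₀(ℕ, K) →L[K] C₀(ℕ, K)} {ma mb : ℕ → K}
    (hA : IsDiag A ma) (hB : IsDiag B mb) : IsDiag (A - B) (fun n => ma n - mb n) := by
  intro y n
  simp [ContinuousLinearMap.sub_apply, hA y n, hB y n, sub_mul]

lemma IsDiag.smul {A : C₀(ℕ, K) →L[K] C₀(ℕ, K)} {ma : ℕ → K} (c : K)
    (hA : IsDiag A ma) : IsDiag (c • A) (fun n => c * ma n) := by
  intro y n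
  rw [ContinuousLinearMap.smul_apply, ZeroAtInftyContinuousMap.smul_apply,
    hA y n, smul_eq_mul, mul_assoc]

lemma IsDiag.pow {A : C₀(ℕ, K) →L[K] C₀(ℕ, K)} {ma : ℕ → K}
    (hA : IsDiag A ma) (k : ℕ) : IsDiag (A ^ k) (fun n => ma n ^ k) := by
  induction k with
  | zero => simpa [pow_zero] using (IsDiag.one (K := K))
  | succ k ih => simpa [pow_succ] using ih.mul hA

lemma IsDiag.aeval {T : C₀(ℕ, K) →L[K] C₀(ℕ, K)} {l : ℕ → K}
    (hT : IsDiag T l) (p : Polynomial K) :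
    IsDiag (Polynomial.aeval T p) (fun n => p.eval (l n)) := by
  induction p using Polynomial.induction_on' with
  | add p q hp hq => simpa using hp.add hq
  | monomial k a =>
      have h1 : Polynomial.aeval T (Polynomial.monomial k a) = a • T ^ k := by
        simp [Polynomial.aeval_monomial, Algebra.algebraMap_eq_smul_one, smul_mul_assoc]
      rw [h1]
      have := (hT.pow k).smul a
      simpa [Polynomial.eval_monomial] using this

end Diag

/-- For `z ∉ σ(T)` (the eigenvalues of the compact self-adjoint diagonal operator `T`
together with `0`), the resolvent `R_z(T) = (zI - T)⁻¹` exists and belongs to the closed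
unital subalgebra of bounded operators on `c₀` generated by `T` (the operator-norm
closure of polynomials in `T`). -/
theorem resolvent_mem_closedAlgebra {K : Type*} [NontriviallyNormedField K]
    [IsUltrametricDist K] [CompleteSpace K]
    (l : ℕ → K) (hl : Tendsto l atTop (nhds 0))
    (T : C₀(ℕ, K) →L[K] C₀(ℕ, K)) (hT : ∀ (y : C₀(ℕ, K)) (n : ℕ), T y n = l n * y n)
    (z : K) (hz : z ∉ insert (0 : K) (Set.range l)) :
    ∃ R : C₀(ℕ, K) →L[K] C₀(ℕ, K),
      R * (z • (1 : C₀(ℕ, K) →L[K] C₀(ℕ, K)) - T) = 1 ∧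
      (z • (1 : C₀(ℕ, K) →L[K] C₀(ℕ, K)) - T) * R = 1 ∧
      R ∈ (Algebra.adjoin K {T}).topologicalClosure := by
  classical
  simp only [Set.mem_insert_iff, not_or, Set.mem_range, not_exists] at hz
  obtain ⟨hz0, hzl⟩ := hz
  have hne : ∀ n, z - l n ≠ 0 := fun n => sub_ne_zero.2 fun h => hzl n h.symm
  set c : ℝ := ‖z‖ with hc_def
  have hc : 0 < c := norm_pos_iff.2 hz0
  have htend : ∀ ε : ℝ, 0 < ε → ∃ N, ∀ n ≥ N, ‖l n‖ < ε := by
    intro ε hε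
    obtain ⟨N, hN⟩ := Metric.tendsto_atTop.1 hl ε hε
    exact ⟨N, fun n hn => by simpa [dist_zero_right] using hN n hn⟩
  obtain ⟨N₁, hN₁⟩ := htend c hc
  obtain ⟨N₂, hN₂⟩ := htend (c / 2) (by positivity)
  set S : Finset K := (Finset.range N₁).image l with hS_def
  have hSrange : ∀ s ∈ S, ∃ i, l i = s := by
    intro s hs
    obtain ⟨i, _, hi⟩ := Finset.mem_image.1 hs
    exact ⟨i, hi⟩
  have hzs : ∀ s ∈ S, z - s ≠ 0 := by
    intro s hs
    obtain ⟨i, rfl⟩ := hSrange s hs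
    exact hne i
  have hsmallc : ∀ n, l n ∉ S → ‖l n‖ < c := by
    intro n hn
    by_cases h : n < N₁
    · exact absurd (Finset.mem_image.2 ⟨n, Finset.mem_range.2 h, rfl⟩) hn
    · exact hN₁ n (le_of_not_gt h)
  -- the radius r of the small part
  set FR : Finset ℝ :=
    insert (c / 2) (((Finset.range N₂).image fun n => ‖l n‖).filter (· < c)) with hFR_def
  have hFRne : FR.Nonempty := ⟨c / 2, Finset.mem_insert_self _ _⟩
  set r : ℝ := FR.max' hFRne with hr_def
  have hrc : r < c := by
    rw [hr_def, Finset.max'_lt_iff]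
    intro b hb
    rcases Finset.mem_insert.1 hb with rfl | hb
    · linarith
    · exact (Finset.mem_filter.1 hb).2
  have hr2 : c / 2 ≤ r := Finset.le_max' _ _ (Finset.mem_insert_self _ _)
  have hr0 : 0 < r := lt_of_lt_of_le (by positivity) hr2
  have hsm : ∀ n, l n ∉ S → ‖l n‖ ≤ r := by
    intro n hn
    by_cases h : n < N₂
    · refine Finset.le_max' _ _ ?_
      refine Finset.mem_insert_of_mem (Finset.mem_filter.2 ⟨?_, hsmallc n hn⟩)
      exact Finset.mem_image.2 ⟨n, Finset.mem_range.2 h, rfl⟩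
    · exact le_trans (le_of_lt (hN₂ n (le_of_not_gt h))) hr2
  -- ultrametric lower bound
  have hult : ∀ x : K, ‖x‖ < c → c ≤ ‖z - x‖ := by
    intro x hx
    have h := IsUltrametricDist.norm_add_le_max (z - x) x
    rw [sub_add_cancel] at h
    rcases le_max_iff.1 h with h | h
    · exact h
    · linarith
  -- uniform lower bound for ‖z - l n‖
  set FD : Finset ℝ := insert c (S.image fun s => ‖z - s‖) with hFD_def
  have hFDne : FD.Nonempty := ⟨c, Finset.mem_insert_self _ _⟩
  set δ : ℝ := FD.min' hFDne with hδ_def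
  have hδ0 : 0 < δ := by
    rw [hδ_def, Finset.lt_min'_iff]
    intro b hb
    rcases Finset.mem_insert.1 hb with rfl | hb
    · exact hc
    · obtain ⟨s, hs, rfl⟩ := Finset.mem_image.1 hb
      exact norm_pos_iff.2 (hzs s hs)
  have hδc : δ ≤ c := Finset.min'_le _ _ (Finset.mem_insert_self _ _)
  have hδle : ∀ n, δ ≤ ‖z - l n‖ := by
    intro n
    by_cases h : l n ∈ S
    · exact Finset.min'_le _ _ (Finset.mem_insert_of_mem (Finset.mem_image.2 ⟨l n, h, rfl⟩))
    · exact le_trans hδc (hult _ (hsmallc n h))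
  -- the resolvent as a diagonal operator
  set f : ℕ → K := fun n => (z - l n)⁻¹ with hf_def
  have hfbd : ∀ n, ‖f n‖ ≤ δ⁻¹ := by
    intro n
    rw [hf_def, norm_inv]
    exact inv_anti₀ hδ0 (hδle n)
  set R : C₀(ℕ, K) →L[K] C₀(ℕ, K) := diagOp f δ⁻¹ hfbd with hR_def
  have hRdiag : IsDiag R f := diagOp_isDiag f δ⁻¹ hfbd
  have hTdiag : IsDiag T l := hT
  have hzT : IsDiag (z • (1 : C₀(ℕ, K) →L[K] C₀(ℕ, K)) - T) (fun n => z - l n) :=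
    ((IsDiag.one.smul z).sub hTdiag).congr fun n => by ring
  refine ⟨R, ?_, ?_, ?_⟩
  · exact ((hRdiag.mul hzT).congr fun n => inv_mul_cancel₀ (hne n)).ext IsDiag.one
  · exact ((hzT.mul hRdiag).congr fun n => mul_inv_cancel₀ (hne n)).ext IsDiag.one
  · -- closure membership
    rw [← SetLike.mem_coe, Subalgebra.topologicalClosure_coe, Metric.mem_closure_iff]
    intro ε hε
    -- constants
    set A₀ : ℝ := ∏ s ∈ S, ‖z - s‖⁻¹ with hA₀_def
    set M : ℝ := ∏ s ∈ S, (r + ‖s‖) with hM_def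
    have hA₀0 : 0 ≤ A₀ := Finset.prod_nonneg fun s _ => by positivity
    have hM0 : 0 ≤ M := Finset.prod_nonneg fun s _ => by
      have := norm_nonneg s; linarith
    set t : ℝ := r / c with ht_def
    have ht0 : 0 ≤ t := by positivity
    have ht1 : t < 1 := (div_lt_one hc).2 hrc
    -- choose the degree m
    obtain ⟨m, hm⟩ : ∃ m : ℕ, A₀ * M * t ^ m < δ * ε := by
      have h := (tendsto_pow_atTop_nhds_zero_of_lt_one ht0 ht1).const_mul (A₀ * M)
      rw [mul_zero] at h
      exact (h.eventually (gt_mem_nhds (by positivity))).exists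
    set B : ℝ := A₀ * M * t ^ m with hB_def
    have hB0 : 0 ≤ B := by positivity
    -- the auxiliary polynomial q
    set a : K := (z⁻¹) ^ m * ∏ s ∈ S, (z - s)⁻¹ with ha_def
    set q : Polynomial K := Polynomial.C a * Polynomial.X ^ m *
      ∏ s ∈ S, (Polynomial.X - Polynomial.C s) with hq_def
    have hq_eval : ∀ x : K, q.eval x = a * x ^ m * ∏ s ∈ S, (x - s) := by
      intro x; simp [hq_def, Polynomial.eval_prod]
    have hqz : q.eval z = 1 := by
      rw [hq_eval, ha_def]
      have h1 : (∏ s ∈ S, (z - s)) ≠ 0 := Finset.prod_ne_zero_iff.2 hzs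
      rw [Finset.prod_inv_distrib, inv_pow]
      field_simp
    -- the approximating polynomial P
    obtain ⟨P, hP⟩ : ∃ P : Polynomial K, ∀ x, (z - x) * P.eval x = 1 - q.eval x := by
      have hroot : (Polynomial.X - Polynomial.C z) ∣ (1 - q) :=
        Polynomial.dvd_iff_isRoot.2 (by simp [Polynomial.IsRoot, hqz])
      obtain ⟨p, hp⟩ := hroot
      refine ⟨-p, fun x => ?_⟩
      have h := congrArg (Polynomial.eval x) hp
      simp at h
      rw [Polynomial.eval_neg]
      linear_combination -h
    -- bound on ‖q.eval (l n)‖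
    have hqbound : ∀ n, ‖q.eval (l n)‖ ≤ B := by
      intro n
      by_cases h : l n ∈ S
      · rw [hq_eval]
        rw [Finset.prod_eq_zero h (sub_self (l n))]
        simpa using hB0
      · rw [hq_eval]
        have hxr : ‖l n‖ ≤ r := hsm n h
        have hnorm : ‖a * l n ^ m * ∏ s ∈ S, (l n - s)‖ =
            (‖a‖ * ‖l n‖ ^ m) * ∏ s ∈ S, ‖l n - s‖ := by
          rw [norm_mul, norm_mul, norm_pow, norm_prod]
        rw [hnorm]
        have ha_norm : ‖a‖ = (c⁻¹) ^ m * A₀ := by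
          rw [ha_def, norm_mul, norm_pow, norm_inv, norm_prod, hA₀_def]
          congr 1
          exact Finset.prod_congr rfl fun s _ => norm_inv _
        have h1 : ‖l n‖ ^ m ≤ r ^ m := pow_le_pow_left₀ (norm_nonneg _) hxr m
        have h2 : ∏ s ∈ S, ‖l n - s‖ ≤ M := by
          rw [hM_def]
          refine Finset.prod_le_prod (fun s _ => norm_nonneg _) fun s _ => ?_
          calc ‖l n - s‖ ≤ ‖l n‖ + ‖s‖ := norm_sub_le _ _
            _ ≤ r + ‖s‖ := by linarith
        have key : (‖a‖ * r ^ m) * M = B := by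
          rw [ha_norm, hB_def, ht_def, div_pow]
          have hcm : (c : ℝ) ^ m ≠ 0 := pow_ne_zero m (ne_of_gt hc)
          field_simp
          rw [one_div, inv_pow, mul_comm _ (c ^ m), ← mul_assoc, ← mul_assoc, mul_inv_cancel₀ hcm, one_mul]
        calc (‖a‖ * ‖l n‖ ^ m) * ∏ s ∈ S, ‖l n - s‖
            ≤ (‖a‖ * r ^ m) * M := by
              have ha0 : 0 ≤ ‖a‖ := norm_nonneg _
              have h3 : ∏ s ∈ S, ‖l n - s‖ ≥ 0 :=
                Finset.prod_nonneg fun s _ => norm_nonneg _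
              have h4 : ‖a‖ * ‖l n‖ ^ m ≤ ‖a‖ * r ^ m :=
                mul_le_mul_of_nonneg_left h1 ha0
              exact mul_le_mul h4 h2 h3 (by positivity)
          _ = B := key
    -- per-coordinate estimate
    have hest : ∀ n, ‖f n - P.eval (l n)‖ ≤ δ⁻¹ * B := by
      intro n
      have hx := hne n
      have key : f n - P.eval (l n) = (z - l n)⁻¹ * q.eval (l n) := by
        rw [hf_def]
        have h := hP (l n)
        field_simp
        linear_combination -h
      rw [key, norm_mul, norm_inv]
      have h1 : ‖z - l n‖⁻¹ ≤ δ⁻¹ := inv_anti₀ hδ0 (hδle n)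
      exact mul_le_mul h1 (hqbound n) (norm_nonneg _) (by positivity)
    -- assemble
    refine ⟨Polynomial.aeval T P, ?_, ?_⟩
    · exact SetLike.mem_coe.2 (Polynomial.aeval_mem_adjoin_singleton K T)
    · rw [dist_eq_norm]
      have hdiff : IsDiag (R - Polynomial.aeval T P)
          (fun n => f n - P.eval (l n)) := hRdiag.sub (hTdiag.aeval P)
      have hnorm_le : ‖R - Polynomial.aeval T P‖ ≤ δ⁻¹ * B :=
        isDiag_opNorm_le hdiff (by positivity) hest
      calc ‖R - Polynomial.aeval T P‖ ≤ δ⁻¹ * B := hnorm_le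
        _ < δ⁻¹ * (δ * ε) := by
            refine mul_lt_mul_of_pos_left hm ?_
            positivity
        _ = ε := by field_simp
end

section
/- Let T = ∑_{i=1}^n λ_i P_i be a finite-rank operator with pairwise orthogonal idempotents P_i and pairwise distinct nonzero scalars λ_i. Then the closed algebra 𝓛_T generated by {I, T} equals the linear span of {I, P_1, ..., P_n}. In particular 𝓛_T is (n+1)-dimensional. -/
open scoped ZeroAtInfty

set_option maxHeartbeats 1000000
set_option synthInstance.maxHeartbeats 400000

noncomputable def auxBump {K : Type*} [NormedField K] (k : ℕ) : C₀(ℕ, K) :=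
  { toFun := fun m => if m = k then 1 else 0
    continuous_toFun := continuous_of_discreteTopology
    zero_at_infty' := by
      apply Filter.Tendsto.congr' _ tendsto_const_nhds
      filter_upwards [Filter.mem_cocompact.mpr ⟨{k}, isCompact_singleton, subset_rfl⟩] with m hm
      simp_all [Set.mem_compl_iff] }

theorem aux_not_finiteDimensional {K : Type*} [NormedField K] :
    ¬ FiniteDimensional K C₀(ℕ, K) := by
  intro h
  refine Module.Finite.not_linearIndependent_of_infinite (R := K) (auxBump (K := K)) ?_
  rw [linearIndependent_iff']
  intro s g hsum j hj
  let φ : C₀(ℕ, K) →+ K :=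
    { toFun := fun f => f j
      map_zero' := rfl
      map_add' := fun f g => rfl }
  have h2 := congrArg φ hsum
  rw [map_sum, map_zero] at h2
  have h3 : ∀ i ∈ s, φ (g i • auxBump (K := K) i) = if j = i then g i else 0 := by
    intro i _
    simp only [φ, AddMonoidHom.coe_mk, ZeroHom.coe_mk, ZeroAtInftyContinuousMap.coe_smul,
      Pi.smul_apply, auxBump, ZeroAtInftyContinuousMap.coe_mk, smul_eq_mul]
    show g i * (if j = i then 1 else 0) = _
    split <;> simp
  rw [Finset.sum_congr rfl h3, Finset.sum_ite_eq s j g, if_pos hj] at h2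
  exact h2

theorem aux_not_compact_id {K : Type*} [NontriviallyNormedField K] [CompleteSpace K] :
    ¬ IsCompactOperator (fun x : C₀(ℕ, K) => x) := by
  intro h
  rw [isCompactOperator_iff_exists_mem_nhds_image_subset_compact] at h
  obtain ⟨V, hV, W, hW, hVW⟩ := h
  have : LocallyCompactSpace C₀(ℕ, K) :=
    hW.locallyCompactSpace_of_mem_nhds_of_addGroup (Filter.mem_of_superset hV (by simpa using hVW))
  exact aux_not_finiteDimensional (FiniteDimensional.of_locallyCompactSpace K)

section AuxSmul

variable {K : Type*} [NontriviallyNormedField K]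

theorem aux_smul_mul (a : K) (f g : C₀(ℕ, K) →L[K] C₀(ℕ, K)) :
    (a • f) * g = a • (f * g) := rfl

theorem aux_mul_smul (a : K) (f g : C₀(ℕ, K) →L[K] C₀(ℕ, K)) :
    f * (a • g) = a • (f * g) := by
  ext v; simp [ContinuousLinearMap.mul_apply]

theorem aux_smul_zero (a : K) : a • (0 : C₀(ℕ, K) →L[K] C₀(ℕ, K)) = 0 := by
  ext v; simp

theorem aux_zero_smul (x : C₀(ℕ, K) →L[K] C₀(ℕ, K)) : (0 : K) • x = 0 := by
  ext v; simp

theorem aux_one_smul (x : C₀(ℕ, K) →L[K] C₀(ℕ, K)) : (1 : K) • x = x := by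
  ext v; simp

theorem aux_smul_smul (a b : K) (x : C₀(ℕ, K) →L[K] C₀(ℕ, K)) :
    a • b • x = (a * b) • x := by
  ext v; simp [mul_assoc]

theorem aux_add_smul (a b : K) (x : C₀(ℕ, K) →L[K] C₀(ℕ, K)) :
    (a + b) • x = a • x + b • x := by
  ext v; simp [add_mul]

theorem aux_smul_add (a : K) (x y : C₀(ℕ, K) →L[K] C₀(ℕ, K)) :
    a • (x + y) = a • x + a • y := by
  ext v; simp [mul_add]

theorem aux_smul_sub (a : K) (x y : C₀(ℕ, K) →L[K] C₀(ℕ, K)) :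
    a • (x - y) = a • x - a • y := by
  ext v; simp [mul_sub]

theorem aux_neg_smul (a : K) (x : C₀(ℕ, K) →L[K] C₀(ℕ, K)) :
    (-a) • x = -(a • x) := by
  ext v; simp

theorem aux_smul_ne_zero {a : K} {x : C₀(ℕ, K) →L[K] C₀(ℕ, K)} (h : a • x = 0)
    (ha : a ≠ 0) : x = 0 := by
  calc x = a⁻¹ • (a • x) := by rw [aux_smul_smul, inv_mul_cancel₀ ha, aux_one_smul]
  _ = 0 := by rw [h, aux_smul_zero]

theorem aux_smul_sum {ι : Type*} (a : K) (s : Finset ι)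
    (f : ι → (C₀(ℕ, K) →L[K] C₀(ℕ, K))) :
    a • ∑ i ∈ s, f i = ∑ i ∈ s, a • f i := by
  classical
  induction s using Finset.induction_on with
  | empty => simpa using aux_smul_zero a
  | @insert b s hb ih => rw [Finset.sum_insert hb, Finset.sum_insert hb, aux_smul_add, ih]

end AuxSmul

/-- Let `T = ∑_{i=1}^n λ_i P_i` be a finite-rank (compact) operator on `c₀` with pairwise
orthogonal nonzero idempotents `P_i` and pairwise distinct nonzero scalars `λ_i`. Then the
closed algebra `𝓛_T` generated by `{I, T}` equals the linear span of `{I, P_1, ..., P_n}`;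
in particular `𝓛_T` is `(n+1)`-dimensional. -/
theorem closedAlgebra_eq_span_projections {K : Type*} [NontriviallyNormedField K]
    [IsUltrametricDist K] [CompleteSpace K]
    (n : ℕ) (l : Fin n → K) (P : Fin n → (C₀(ℕ, K) →L[K] C₀(ℕ, K)))
    (hidem : ∀ i, P i * P i = P i)
    (horth : ∀ i j, i ≠ j → P i * P j = 0)
    (hPne : ∀ i, P i ≠ 0)
    (hPc : ∀ i, IsCompactOperator (P i))
    (hne : ∀ i, l i ≠ 0) (hinj : Function.Injective l)
    (T : C₀(ℕ, K) →L[K] C₀(ℕ, K)) (hTdef : T = ∑ i, l i • P i) :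
    ((Algebra.adjoin K {T}).topologicalClosure :
        Set (C₀(ℕ, K) →L[K] C₀(ℕ, K))) =
      (Submodule.span K (insert (1 : C₀(ℕ, K) →L[K] C₀(ℕ, K)) (Set.range P)) :
        Submodule K (C₀(ℕ, K) →L[K] C₀(ℕ, K))) ∧
    Module.finrank K
      (Submodule.span K (insert (1 : C₀(ℕ, K) →L[K] C₀(ℕ, K)) (Set.range P))) = n + 1 := by
  set S : Submodule K (C₀(ℕ, K) →L[K] C₀(ℕ, K)) :=
    Submodule.span K (insert (1 : C₀(ℕ, K) →L[K] C₀(ℕ, K)) (Set.range P)) with hS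
  -- T * P j = l j • P j
  have hTP : ∀ j, T * P j = l j • P j := by
    intro j
    rw [hTdef, Finset.sum_mul, Finset.sum_eq_single j]
    · rw [aux_smul_mul, hidem]
    · intro i _ hij; rw [aux_smul_mul, horth i j hij, aux_smul_zero]
    · intro h; exact absurd (Finset.mem_univ j) h
  -- polynomial evaluation lemma
  have halg : ∀ (p : Polynomial K) (j : Fin n),
      (Polynomial.aeval T p) * P j = p.eval (l j) • P j := by
    intro p j
    induction p using Polynomial.induction_on with
    | C a =>
      rw [Polynomial.aeval_C, Polynomial.eval_C, Algebra.algebraMap_eq_smul_one,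
        aux_smul_mul, one_mul]
    | add p q hp hq => rw [map_add, add_mul, hp, hq, Polynomial.eval_add, aux_add_smul]
    | monomial m a ih =>
      have h1 : (Polynomial.C a * Polynomial.X ^ (m + 1) : Polynomial K) = Polynomial.C a * Polynomial.X ^ m * Polynomial.X := by ring
      rw [h1, map_mul, Polynomial.aeval_X, mul_assoc, hTP, aux_mul_smul, ih, aux_smul_smul]
      congr 1
      simp only [Polynomial.eval_mul, Polynomial.eval_C, Polynomial.eval_pow, Polynomial.eval_X]
      ring
  -- P k ∈ adjoin
  have hPadj : ∀ k, P k ∈ Algebra.adjoin K {T} := by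
    intro k
    set d : K := l k * ∏ i ∈ Finset.univ.erase k, (l k - l i) with hd
    have hdne : d ≠ 0 := by
      refine mul_ne_zero (hne k) (Finset.prod_ne_zero_iff.mpr ?_)
      intro i hi
      rw [Finset.mem_erase] at hi
      exact sub_ne_zero_of_ne fun h => hi.1 (hinj h.symm)
    set q : Polynomial K := (∏ i ∈ Finset.univ.erase k, (Polynomial.X - Polynomial.C (l i))) * Polynomial.X with hq
    have heval : ∀ j, (∏ i ∈ Finset.univ.erase k, (Polynomial.X - Polynomial.C (l i)) : Polynomial K).eval (l j)
        = ∏ i ∈ Finset.univ.erase k, (l j - l i) := by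
      intro j
      rw [Polynomial.eval_prod]
      exact Finset.prod_congr rfl fun i _ => by
        rw [Polynomial.eval_sub, Polynomial.eval_X, Polynomial.eval_C]
    have key : Polynomial.aeval T q = d • P k := by
      rw [hq, map_mul, Polynomial.aeval_X]
      set A : C₀(ℕ, K) →L[K] C₀(ℕ, K) :=
        Polynomial.aeval T (∏ i ∈ Finset.univ.erase k, (Polynomial.X - Polynomial.C (l i)) : Polynomial K) with hA
      rw [hTdef, Finset.mul_sum]
      rw [Finset.sum_eq_single k]
      · rw [aux_mul_smul, hA, halg, heval, aux_smul_smul, hd, mul_comm (l k)]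
      · intro j _ hjk
        rw [aux_mul_smul, hA, halg, heval,
          Finset.prod_eq_zero (Finset.mem_erase.mpr ⟨hjk, Finset.mem_univ j⟩) (sub_self (l j)),
          aux_zero_smul, aux_smul_zero]
      · intro h; exact absurd (Finset.mem_univ k) h
    have hPk : P k = d⁻¹ • Polynomial.aeval T q := by
      rw [key, aux_smul_smul, inv_mul_cancel₀ hdne, aux_one_smul]
    rw [hPk]
    refine Subalgebra.smul_mem _ ?_ _
    rw [Algebra.adjoin_singleton_eq_range_aeval]
    exact ⟨q, rfl⟩
  -- membership facts for S
  have h1S : (1 : C₀(ℕ, K) →L[K] C₀(ℕ, K)) ∈ S := Submodule.subset_span (Set.mem_insert _ _)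
  have hPS : ∀ j, P j ∈ S := fun j =>
    Submodule.subset_span (Set.mem_insert_of_mem _ ⟨j, rfl⟩)
  have hTS : T ∈ S := by
    rw [hTdef]; exact sum_mem fun i _ => Submodule.smul_mem _ _ (hPS i)
  -- S is closed under multiplication
  have hgenmul : ∀ x ∈ insert (1 : C₀(ℕ, K) →L[K] C₀(ℕ, K)) (Set.range P),
      ∀ y ∈ S, x * y ∈ S := by
    rintro x (rfl | ⟨j, rfl⟩) y hy
    · rw [one_mul]; exact hy
    · induction hy using Submodule.span_induction with
      | mem z hz =>
        rcases hz with rfl | ⟨i, rfl⟩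
        · rw [mul_one]; exact hPS j
        · rcases eq_or_ne j i with rfl | hne'
          · rw [hidem]; exact hPS j
          · rw [horth j i hne']; exact zero_mem _
      | zero => rw [mul_zero]; exact zero_mem _
      | add y z _ _ hy hz => rw [mul_add]; exact add_mem hy hz
      | smul a y _ hy => rw [aux_mul_smul]; exact Submodule.smul_mem _ _ hy
  have hmul : ∀ x ∈ S, ∀ y ∈ S, x * y ∈ S := by
    intro x hx
    induction hx using Submodule.span_induction with
    | mem z hz => exact hgenmul z hz
    | zero => intro y hy; rw [zero_mul]; exact zero_mem _
    | add x z _ _ hx hz => intro y hy; rw [add_mul]; exact add_mem (hx y hy) (hz y hy)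
    | smul a x _ hx => intro y hy; rw [aux_smul_mul]; exact Submodule.smul_mem _ _ (hx y hy)
  have hadjsub : (Algebra.adjoin K {T} : Set (C₀(ℕ, K) →L[K] C₀(ℕ, K))) ⊆ S := by
    intro x hx
    induction hx using Algebra.adjoin_induction with
    | mem z hz => rw [Set.mem_singleton_iff.mp hz]; exact hTS
    | algebraMap r =>
      rw [Algebra.algebraMap_eq_smul_one]
      exact Submodule.smul_mem _ _ h1S
    | add x y _ _ hx hy => exact add_mem hx hy
    | mul x y _ _ hx hy => exact hmul x hx y hy
  have hSle : (S : Set (C₀(ℕ, K) →L[K] C₀(ℕ, K))) ⊆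
      (Algebra.adjoin K {T} : Set (C₀(ℕ, K) →L[K] C₀(ℕ, K))) := by
    have hle : S ≤ Subalgebra.toSubmodule (Algebra.adjoin K {T}) := by
      rw [hS, Submodule.span_le]
      rintro x (rfl | ⟨j, rfl⟩)
      · exact Subalgebra.one_mem _
      · exact hPadj j
    exact fun x hx => hle hx
  haveI : FiniteDimensional K S :=
    FiniteDimensional.span_of_finite K ((Set.finite_range P).insert 1)
  have hclosed : IsClosed (S : Set (C₀(ℕ, K) →L[K] C₀(ℕ, K))) :=
    Submodule.closed_of_finiteDimensional S
  constructor
  · rw [Subalgebra.topologicalClosure_coe]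
    refine Set.Subset.antisymm (closure_minimal hadjsub hclosed) ?_
    exact fun x hx => subset_closure (hSle hx)
  · -- finrank
    have hrange : Set.range (Fin.cons (1 : C₀(ℕ, K) →L[K] C₀(ℕ, K)) P)
        = insert (1 : C₀(ℕ, K) →L[K] C₀(ℕ, K)) (Set.range P) := Fin.range_cons _ _
    have hli : LinearIndependent K
        (Fin.cons (1 : C₀(ℕ, K) →L[K] C₀(ℕ, K)) P : Fin (n + 1) → _) := by
      rw [Fintype.linearIndependent_iff]
      intro g hsum
      rw [Fin.sum_univ_succ] at hsum
      simp only [Fin.cons_zero, Fin.cons_succ] at hsum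
      have hk : ∀ k : Fin n, g 0 + g k.succ = 0 := by
        intro k
        have h2 := congrArg (· * P k) hsum
        simp only [add_mul, Finset.sum_mul, aux_smul_mul, one_mul, zero_mul] at h2
        rw [Finset.sum_eq_single k (fun j _ hjk => by rw [horth j k hjk, aux_smul_zero])
          (fun h => absurd (Finset.mem_univ k) h), hidem, ← aux_add_smul] at h2
        by_contra hc
        exact hPne k (aux_smul_ne_zero h2 hc)
      have hg0 : g 0 = 0 := by
        by_contra hg0
        have hgj : ∀ j : Fin n, g j.succ = -g 0 := fun j =>
          eq_neg_of_add_eq_zero_left (by rw [add_comm]; exact hk j)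
        have h5 : g 0 • ((1 : C₀(ℕ, K) →L[K] C₀(ℕ, K)) - ∑ j, P j) = 0 := by
          rw [aux_smul_sub, aux_smul_sum, ← hsum, sub_eq_add_neg, ← Finset.sum_neg_distrib]
          congr 1
          exact Finset.sum_congr rfl fun j _ => by rw [hgj j, aux_neg_smul]
        have hone : (1 : C₀(ℕ, K) →L[K] C₀(ℕ, K)) = ∑ j, P j :=
          sub_eq_zero.mp (aux_smul_ne_zero h5 hg0)
        have hcomp : ∀ s : Finset (Fin n),
            IsCompactOperator ⇑(∑ j ∈ s, P j : C₀(ℕ, K) →L[K] C₀(ℕ, K)) := by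
          intro s
          induction s using Finset.induction_on with
          | empty => simpa using isCompactOperator_zero
          | @insert a s ha ih =>
            rw [Finset.sum_insert ha]
            exact IsCompactOperator.add (by simpa using hPc a) ih
        have hfin := hcomp Finset.univ
        rw [← hone] at hfin
        exact aux_not_compact_id (K := K) (by exact hfin)
      intro i
      refine Fin.cases hg0 (fun k => ?_) i
      have := hk k
      rw [hg0, zero_add] at this
      exact this
    have hcard := finrank_span_eq_card (R := K) hli
    rw [hrange, ← hS] at hcard
    rw [hcard, Fintype.card_fin]
end
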